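/- Let ω₀ := H + (1/2)∫₀^π Q(t)dt. Then, as |ρ| → ∞, V(S(·,λ)) = cos(ρπ)·I_m + (sin(ρπ)/ρ)·ω₀ − (1/(2ρ))∫₀^π sin(ρ(π−2t))Q(t)dt + r₀(ρ)/ρ, where the remainder satisfies ‖r₀(ρ)‖ ≤ C·exp(|τ|π)/|ρ| for some constant C and all |ρ| sufficiently large. -/

import Mathlib

set_option autoImplicit false
set_option maxHeartbeats 1000000

open MeasureTheory Filter Topology Matrix Set intervalIntegral

noncomputable section

attribute [local instance] Matrix.linftyOpNormedAddCommGroup Matrix.linftyOpNormedSpace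
  Matrix.linftyOpNormedRing Matrix.linftyOpNormedAlgebra

/-- Square complex matrices of size `m`. -/
abbrev Mat (m : ℕ) := Matrix (Fin m) (Fin m) ℂ

/-- Principal square root of a complex number (branch with nonnegative real part). -/
def csqrt (z : ℂ) : ℂ := z ^ ((1 : ℂ)/2)

/-- `Y` (with derivative `Y'`) is a matrix solution of `-Y'' + Q Y = λ Y`, in integrated form. -/
def IsMatSol {m : ℕ} (Q : ℝ → Mat m) (lam : ℂ) (Y Y' : ℝ → Mat m) : Prop :=
  (∀ x : ℝ, HasDerivAt Y (Y' x) x) ∧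
  (∀ x : ℝ, Y' x = Y' 0 + ∫ t in (0:ℝ)..x, (Q t * Y t - lam • Y t))

lemma abs_sin_le (w : ℂ) : ‖Complex.sin w‖ ≤ Real.exp |w.im| := by
  have h1 : Complex.sin w = (Complex.exp (-w * Complex.I) - Complex.exp (w * Complex.I)) * Complex.I / 2 := rfl
  rw [h1]
  rw [norm_div, norm_mul, Complex.norm_I, mul_one]
  have h2 : ‖(2:ℂ)‖ = 2 := by norm_num
  rw [h2]
  have h3 : ‖Complex.exp (-w * Complex.I) - Complex.exp (w * Complex.I)‖ ≤
      Real.exp w.im + Real.exp (-w.im) := by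
    refine (norm_sub_le _ _).trans ?_
    rw [Complex.norm_exp, Complex.norm_exp]
    simp [Complex.mul_re, Complex.I_re, Complex.I_im]
  have h4 : Real.exp w.im ≤ Real.exp |w.im| := Real.exp_le_exp.2 (le_abs_self _)
  have h5 : Real.exp (-w.im) ≤ Real.exp |w.im| := Real.exp_le_exp.2 (neg_le_abs _)
  nlinarith [Real.exp_pos |w.im|]

lemma abs_cos_le (w : ℂ) : ‖Complex.cos w‖ ≤ Real.exp |w.im| := by
  have h1 : Complex.cos w = (Complex.exp (w * Complex.I) + Complex.exp (-w * Complex.I)) / 2 := rfl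
  rw [h1, norm_div]
  have h2 : ‖(2:ℂ)‖ = 2 := by norm_num
  rw [h2]
  have h3 : ‖Complex.exp (w * Complex.I) + Complex.exp (-w * Complex.I)‖ ≤
      Real.exp (-w.im) + Real.exp w.im := by
    refine (norm_add_le _ _).trans ?_
    rw [Complex.norm_exp, Complex.norm_exp]
    simp [Complex.mul_re, Complex.I_re, Complex.I_im]
  have h4 : Real.exp w.im ≤ Real.exp |w.im| := Real.exp_le_exp.2 (le_abs_self _)
  have h5 : Real.exp (-w.im) ≤ Real.exp |w.im| := Real.exp_le_exp.2 (neg_le_abs _)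
  nlinarith [Real.exp_pos |w.im|]

section Helpers
variable {E : Type*} [NormedAddCommGroup E] [NormedSpace ℂ E]

lemma intInt_cont_smul {F : ℝ → E} {a b : ℝ} (hF : IntervalIntegrable F volume a b)
    {φ : ℝ → ℂ} (hφ : ContinuousOn φ (Set.uIcc a b)) :
    IntervalIntegrable (fun t => φ t • F t) volume a b := by
  rw [intervalIntegrable_iff] at hF ⊢
  obtain ⟨C, hC⟩ := (isCompact_uIcc (a := a) (b := b)).exists_bound_of_continuousOn hφ
  have hmem : MemLp φ ⊤ (volume.restrict (Set.uIoc a b)) := by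
    refine memLp_top_of_bound ((hφ.mono uIoc_subset_uIcc).aestronglyMeasurable measurableSet_uIoc) C ?_
    filter_upwards [ae_restrict_mem measurableSet_uIoc] with x hx
    exact hC x (uIoc_subset_uIcc hx)
  exact hF.smul_of_top_right hmem

lemma hasDerivAt_cos_aff (c d : ℂ) (x : ℝ) :
    HasDerivAt (fun t : ℝ => Complex.cos (c * (d - (t:ℂ)))) (c * Complex.sin (c * (d - (x:ℂ)))) x := by
  have hin : HasDerivAt (fun w : ℂ => c * (d - w)) (c * (-1)) (x:ℂ) :=
    ((hasDerivAt_id (x:ℂ)).const_sub d).const_mul c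
  have := ((Complex.hasDerivAt_cos (c * (d - (x:ℂ)))).comp (x:ℂ) hin).comp_ofReal
  exact this.congr_deriv (by ring)

lemma hasDerivAt_sin_aff (c d : ℂ) (x : ℝ) :
    HasDerivAt (fun t : ℝ => Complex.sin (c * (d - (t:ℂ)))) (-(c * Complex.cos (c * (d - (x:ℂ))))) x := by
  have hin : HasDerivAt (fun w : ℂ => c * (d - w)) (c * (-1)) (x:ℂ) :=
    ((hasDerivAt_id (x:ℂ)).const_sub d).const_mul c
  have := ((Complex.hasDerivAt_sin (c * (d - (x:ℂ)))).comp (x:ℂ) hin).comp_ofReal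
  exact this.congr_deriv (by ring)

end Helpers

section PartsPrim

variable {E : Type*} [NormedAddCommGroup E] [NormedSpace ℂ E] [CompleteSpace E]

lemma parts_primitive {F : ℝ → E} {b : ℝ} (hb : 0 ≤ b)
    (hF : IntervalIntegrable F volume 0 b) {φ φ' : ℝ → ℂ}
    (hφ : ∀ x, HasDerivAt φ (φ' x) x) (hφ'c : Continuous φ') :
    ∫ t in (0:ℝ)..b, φ' t • (∫ s in (0:ℝ)..t, F s) =
      φ b • (∫ s in (0:ℝ)..b, F s) - ∫ t in (0:ℝ)..b, φ t • F t := by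
  have hφc : Continuous φ := by
    rw [continuous_iff_continuousAt]; exact fun x => (hφ x).continuousAt
  set μb := volume.restrict (Set.Ioc (0:ℝ) b) with hμb
  have hFi : IntegrableOn F (Set.Ioc 0 b) volume := by
    rwa [intervalIntegrable_iff, uIoc_of_le hb] at hF
  have hφ'i : Integrable φ' μb :=
    (hφ'c.continuousOn.integrableOn_compact isCompact_Icc).mono_set Ioc_subset_Icc_self
  have hg : Integrable (fun p : ℝ × ℝ => φ' p.1 • F p.2) (μb.prod μb) := Integrable.smul_prod hφ'i hFi
  set T : Set (ℝ × ℝ) := {p | 0 < p.2 ∧ p.2 ≤ p.1} with hT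
  have hTm : MeasurableSet T := by
    have h1 : MeasurableSet {p : ℝ × ℝ | 0 < p.2} := measurable_snd measurableSet_Ioi
    have h2 : MeasurableSet {p : ℝ × ℝ | p.2 ≤ p.1} :=
      (isClosed_le continuous_snd continuous_fst).measurableSet
    exact h1.inter h2
  have hgT : Integrable (T.indicator fun p : ℝ × ℝ => φ' p.1 • F p.2) (μb.prod μb) :=
    hg.indicator hTm
  have swap :
      ∫ t, (∫ s, T.indicator (fun p : ℝ × ℝ => φ' p.1 • F p.2) (t, s) ∂μb) ∂μb =
      ∫ s, (∫ t, T.indicator (fun p : ℝ × ℝ => φ' p.1 • F p.2) (t, s) ∂μb) ∂μb := by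
    apply integral_integral_swap
    exact hgT
  -- left side evaluation
  have hL : ∀ t ∈ Set.Ioc (0:ℝ) b,
      (∫ s, T.indicator (fun p : ℝ × ℝ => φ' p.1 • F p.2) (t, s) ∂μb)
        = φ' t • ∫ s in (0:ℝ)..t, F s := by
    intro t ht
    have h1 : (fun s => T.indicator (fun p : ℝ × ℝ => φ' p.1 • F p.2) (t, s))
        = (Set.Ioc (0:ℝ) t).indicator (fun s => φ' t • F s) := by
      funext s
      by_cases hs : 0 < s ∧ s ≤ t
      · simp [hT, Set.indicator_apply, Set.mem_Ioc, hs]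
      · simp [hT, Set.indicator_apply, Set.mem_Ioc, hs]
    rw [h1, hμb, MeasureTheory.integral_indicator measurableSet_Ioc,
      Measure.restrict_restrict measurableSet_Ioc, Set.Ioc_inter_Ioc]
    simp only [max_self, min_eq_left ht.2]
    rw [MeasureTheory.integral_smul, intervalIntegral.integral_of_le ht.1.le]
  have hR : ∀ s ∈ Set.Ioc (0:ℝ) b,
      (∫ t, T.indicator (fun p : ℝ × ℝ => φ' p.1 • F p.2) (t, s) ∂μb)
        = (φ b - φ s) • F s := by
    intro s hs
    have h1 : (fun t => T.indicator (fun p : ℝ × ℝ => φ' p.1 • F p.2) (t, s))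
        = (Set.Ici s).indicator (fun t => φ' t • F s) := by
      funext t
      by_cases h : s ≤ t
      · simp [hT, Set.indicator_apply, hs.1, h, Set.mem_Ici]
      · simp [hT, Set.indicator_apply, hs.1, h, Set.mem_Ici]
    rw [h1, hμb, MeasureTheory.integral_indicator measurableSet_Ici,
      Measure.restrict_restrict measurableSet_Ici]
    have hset : Set.Ici s ∩ Set.Ioc 0 b = Set.Icc s b := by
      ext t
      simp only [Set.mem_inter_iff, Set.mem_Ici, Set.mem_Ioc, Set.mem_Icc]
      constructor
      · rintro ⟨h1, _, h3⟩; exact ⟨h1, h3⟩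
      · rintro ⟨h1, h2⟩; exact ⟨h1, lt_of_lt_of_le hs.1 h1, h2⟩
    rw [hset, _root_.integral_smul_const, MeasureTheory.integral_Icc_eq_integral_Ioc,
      ← intervalIntegral.integral_of_le hs.2,
      intervalIntegral.integral_eq_sub_of_hasDerivAt (fun x _ => hφ x)
        (hφ'c.intervalIntegrable s b)]
  -- now chain everything
  have hJcont : ContinuousOn (fun x => ∫ s in (0:ℝ)..x, F s) (Set.uIcc 0 b) :=
    intervalIntegral.continuousOn_primitive_interval' hF left_mem_uIcc
  calc ∫ t in (0:ℝ)..b, φ' t • (∫ s in (0:ℝ)..t, F s)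
      = ∫ t, (∫ s, T.indicator (fun p : ℝ × ℝ => φ' p.1 • F p.2) (t, s) ∂μb) ∂μb := by
        rw [intervalIntegral.integral_of_le hb]
        exact (setIntegral_congr_fun measurableSet_Ioc hL).symm
    _ = ∫ s, (∫ t, T.indicator (fun p : ℝ × ℝ => φ' p.1 • F p.2) (t, s) ∂μb) ∂μb := swap
    _ = ∫ s in Set.Ioc (0:ℝ) b, (φ b - φ s) • F s ∂volume :=
        setIntegral_congr_fun measurableSet_Ioc hR
    _ = φ b • (∫ s in (0:ℝ)..b, F s) - ∫ t in (0:ℝ)..b, φ t • F t := by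
        have hsplit : ∀ s, (φ b - φ s) • F s = φ b • F s - φ s • F s := fun s => sub_smul _ _ _
        rw [show (fun s => (φ b - φ s) • F s) = fun s => φ b • F s - φ s • F s from funext hsplit]
        have hint1 : IntegrableOn (fun s => φ b • F s) (Set.Ioc 0 b) volume := hFi.smul (φ b)
        have hint2 : IntegrableOn (fun s => φ s • F s) (Set.Ioc 0 b) volume := by
          have := intInt_cont_smul (E := E) (a := 0) (b := b) hF hφc.continuousOn
          rwa [intervalIntegrable_iff, uIoc_of_le hb] at this
        rw [MeasureTheory.integral_sub hint1 hint2, MeasureTheory.integral_smul,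
          ← intervalIntegral.integral_of_le hb, ← intervalIntegral.integral_of_le hb]

end PartsPrim
lemma key_identity {E : Type*} [NormedAddCommGroup E] [NormedSpace ℂ E] [CompleteSpace E]
    (z : ℂ) (G Y Y' : ℝ → E)
    (hder : ∀ x, HasDerivAt Y (Y' x) x)
    (hY' : ∀ x, Y' x = Y' 0 + ∫ t in (0:ℝ)..x, (G t - z • Y t))
    {b : ℝ} (hb : 0 ≤ b)
    (hG : IntervalIntegrable G volume 0 b)
    (φ φ' φ'' : ℝ → ℂ)
    (hφ : ∀ x, HasDerivAt φ (φ' x) x) (hφd : ∀ x, HasDerivAt φ' (φ'' x) x)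
    (hφ''c : Continuous φ'') (hφeq : ∀ x, φ'' x = -(z * φ x)) :
    ∫ t in (0:ℝ)..b, φ t • G t
      = φ b • Y' b - φ' b • Y b - (φ 0 • Y' 0 - φ' 0 • Y 0) := by
  have hφc : Continuous φ := by
    rw [continuous_iff_continuousAt]; exact fun x => (hφ x).continuousAt
  have hφ'c : Continuous φ' := by
    rw [continuous_iff_continuousAt]; exact fun x => (hφd x).continuousAt
  have hYc : Continuous Y := by
    rw [continuous_iff_continuousAt]; exact fun x => (hder x).continuousAt
  set F : ℝ → E := fun t => G t - z • Y t with hFdef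
  have hFint : IntervalIntegrable F volume 0 b :=
    hG.sub ((hYc.const_smul z).intervalIntegrable 0 b)
  set J : ℝ → E := fun x => ∫ t in (0:ℝ)..x, F t with hJdef
  have hJcont : ContinuousOn J (Set.uIcc 0 b) :=
    intervalIntegral.continuousOn_primitive_interval' hFint left_mem_uIcc
  have hY'cont : ContinuousOn Y' (Set.uIcc 0 b) := by
    have : ContinuousOn (fun x => Y' 0 + J x) (Set.uIcc 0 b) := continuousOn_const.add hJcont
    exact this.congr fun x _ => hY' x
  have h1 : ∫ t in (0:ℝ)..b, φ' t • J t = φ b • J b - ∫ t in (0:ℝ)..b, φ t • F t :=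
    parts_primitive hb hFint hφ hφ'c
  have hφFC : IntervalIntegrable (fun t => φ t • F t) volume 0 b :=
    intInt_cont_smul hFint hφc.continuousOn
  have hφ''S : IntervalIntegrable (fun t => φ'' t • Y t) volume 0 b :=
    ((hφ''c.smul hYc).intervalIntegrable 0 b)
  have hφ'S' : IntervalIntegrable (fun t => φ' t • Y' t) volume 0 b :=
    (hφ'c.continuousOn.smul hY'cont).intervalIntegrable
  have hφ'J : IntervalIntegrable (fun t => φ' t • J t) volume 0 b :=
    (hφ'c.continuousOn.smul hJcont).intervalIntegrable
  have hφint : ∫ t in (0:ℝ)..b, φ' t = φ b - φ 0 :=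
    intervalIntegral.integral_eq_sub_of_hasDerivAt (fun x _ => hφ x)
      (hφ'c.intervalIntegrable 0 b)
  -- FTC for φ' • Y
  have h2 : ∫ t in (0:ℝ)..b, (φ' t • Y' t + φ'' t • Y t) = φ' b • Y b - φ' 0 • Y 0 := by
    apply intervalIntegral.integral_eq_sub_of_hasDerivAt (fun x _ => (hφd x).smul (hder x))
    exact hφ'S'.add hφ''S
  have h2' : ∫ t in (0:ℝ)..b, φ'' t • Y t
      = (φ' b • Y b - φ' 0 • Y 0) - ∫ t in (0:ℝ)..b, φ' t • Y' t := by
    rw [← h2, intervalIntegral.integral_add hφ'S' hφ''S]; abel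
  -- decompose ∫ φ' • Y'
  have h3 : ∫ t in (0:ℝ)..b, φ' t • Y' t
      = (φ b - φ 0) • Y' 0 + ∫ t in (0:ℝ)..b, φ' t • J t := by
    have hcong : ∀ t, φ' t • Y' t = φ' t • Y' 0 + φ' t • J t := by
      intro t; rw [hY' t]; rw [smul_add]
    rw [intervalIntegral.integral_congr (fun t _ => hcong t)]
    rw [intervalIntegral.integral_add ((show Continuous (fun t => φ' t • Y' 0) from hφ'c.smul continuous_const).intervalIntegrable 0 b) hφ'J]
    rw [intervalIntegral.integral_smul_const, hφint]
  -- main computation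
  have hmain : ∀ t, φ t • G t = φ t • F t - φ'' t • Y t := by
    intro t
    have : φ t • G t = φ t • F t + (φ t * z) • Y t := by
      rw [hFdef]; simp only [smul_sub, smul_smul]; abel
    rw [this, hφeq t]; rw [neg_smul]
    have : (φ t * z) = z * φ t := mul_comm _ _
    rw [this]; abel
  rw [intervalIntegral.integral_congr (fun t _ => hmain t)]
  rw [intervalIntegral.integral_sub hφFC hφ''S, h2', h3, h1]
  have hYb : Y' b = Y' 0 + J b := hY' b
  rw [hYb, smul_add, sub_smul]
  abel

instance matENormedAddCommMonoid (m : ℕ) : ENormedAddCommMonoid (Mat m) :=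
  @NormedAddCommGroup.toENormedAddCommMonoid _ Matrix.linftyOpNormedAddCommGroup

instance matPseudoMetrizableSpace (m : ℕ) : TopologicalSpace.PseudoMetrizableSpace (Mat m) :=
  inferInstanceAs (TopologicalSpace.PseudoMetrizableSpace (Fin m → Fin m → ℂ))

/-- the asymptotics
`V(S) = cos(ρπ)·I + (sin(ρπ)/ρ)·ω₀ − (1/(2ρ))∫₀^π sin(ρ(π−2t))Q(t)dt + O(exp(|τ|π)/|ρ|²)`
as `|ρ| → ∞`, where `ρ = √λ` (Re ρ ≥ 0), `τ = Im ρ`, and `ω₀ = H + (1/2)∫₀^π Q(t)dt`;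
the remainder is `r₀(ρ)/ρ` with `‖r₀(ρ)‖ ≤ C·exp(|τ|π)/|ρ|`. -/
theorem statement2
    (m : ℕ) (hm : 1 ≤ m)
    (Q : ℝ → Mat m)
    (hQL2 : ∀ j k : Fin m, MemLp (fun x => Q x j k) 2 (volume.restrict (Set.Ioo 0 Real.pi)))
    (h H : Mat m)
    (ω₀ : Mat m) (hω₀ : ω₀ = H + (2⁻¹ : ℂ) • ∫ t in (0:ℝ)..Real.pi, Q t)
    (S S' : ℂ → ℝ → Mat m)
    (hSsol : ∀ z : ℂ, IsMatSol Q z (S z) (S' z))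
    (hS0 : ∀ z : ℂ, S z 0 = 0) (hS'0 : ∀ z : ℂ, S' z 0 = 1) :
    ∃ C > (0:ℝ), ∃ R > (0:ℝ), ∀ z : ℂ, R ≤ ‖csqrt z‖ →
      ‖(S' z Real.pi + H * S z Real.pi)
          - (Complex.cos (csqrt z * Real.pi) • (1 : Mat m)
            + (Complex.sin (csqrt z * Real.pi) / csqrt z) • ω₀
            - (1 / (2 * csqrt z)) • ∫ t in (0:ℝ)..Real.pi,
                Complex.sin (csqrt z * (Real.pi - 2 * t)) • Q t)‖
        ≤ C * Real.exp (|(csqrt z).im| * Real.pi) / (‖csqrt z‖)^2 := by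
  haveI : Nonempty (Fin m) := ⟨⟨0, hm⟩⟩
  have hpi0 : (0:ℝ) ≤ Real.pi := Real.pi_pos.le
  have hSc : ∀ w : ℂ, Continuous (S w) := fun w =>
    continuous_iff_continuousAt.2 fun x => ((hSsol w).1 x).continuousAt
  -- integrability of Q on [0, π]
  haveI : IsFiniteMeasure (volume.restrict (Set.Ioo 0 Real.pi)) := by
    constructor
    rw [Measure.restrict_apply_univ]
    exact measure_Ioo_lt_top
  have hent : ∀ j k : Fin m, Integrable (fun x => Q x j k)
      (volume.restrict (Set.Ioo 0 Real.pi)) := fun j k =>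
    (hQL2 j k).integrable (by norm_num)
  have hQIoo : IntegrableOn Q (Set.Ioo 0 Real.pi) volume := by
    have hrepr : Q = fun x => ∑ j : Fin m, ∑ k : Fin m,
        Q x j k • (Matrix.single j k (1:ℂ)) := by
      funext x
      ext j k
      simp [Matrix.sum_apply, Matrix.single, Matrix.smul_apply, mul_ite, ite_and,
        Finset.sum_ite_eq, Finset.sum_ite_eq']
    rw [hrepr]
    apply integrable_finset_sum
    intro j _
    apply integrable_finset_sum
    intro k _
    exact (hent j k).smul_const _
  have hQint : IntervalIntegrable Q volume 0 Real.pi := by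
    rw [intervalIntegrable_iff, uIoc_of_le hpi0]
    exact (integrableOn_Ioc_iff_integrableOn_Ioo).2 hQIoo
  have hQnint : IntervalIntegrable (fun t => ‖Q t‖) volume 0 Real.pi := hQint.norm
  set K : ℝ := ∫ t in (0:ℝ)..Real.pi, ‖Q t‖ with hKdef
  have hK0 : 0 ≤ K := intervalIntegral.integral_nonneg hpi0 fun _ _ => norm_nonneg _
  refine ⟨2*K*K + 2*K*‖H‖ + 1, by positivity, 2*K + 1, by positivity, ?_⟩
  intro z hz
  set ρ : ℂ := csqrt z with hρdef
  have hρ1 : (1:ℝ) ≤ ‖ρ‖ := le_trans (by linarith) hz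
  have hρpos : (0:ℝ) < ‖ρ‖ := lt_of_lt_of_le one_pos hρ1
  have hρ0 : ρ ≠ 0 := by
    intro hc
    rw [hc] at hρpos
    simp at hρpos
  have hz0 : z ≠ 0 := by
    intro hc
    apply hρ0
    rw [hρdef, hc, csqrt]
    rw [Complex.zero_cpow (by norm_num)]
  have hzρ : ρ * ρ = z := by
    rw [hρdef]
    show z ^ ((1:ℂ)/2) * z ^ ((1:ℂ)/2) = z
    rw [← Complex.cpow_add _ _ hz0]
    norm_num
  set τ : ℝ := |ρ.im| with hτdef
  have hτ0 : 0 ≤ τ := abs_nonneg _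
  -- interval integrability of Q * S z on subintervals
  have hQS : IntervalIntegrable (fun t => Q t * S z t) volume 0 Real.pi :=
    hQint.mul_continuousOn (hSc z).continuousOn
  have hQSb : ∀ b : ℝ, 0 ≤ b → b ≤ Real.pi →
      IntervalIntegrable (fun t => Q t * S z t) volume 0 b := by
    intro b hb0 hbp
    apply hQS.mono_set
    rw [Set.uIcc_of_le hb0, Set.uIcc_of_le hpi0]
    exact Set.Icc_subset_Icc le_rfl hbp
  -- the sine integral equation
  have keyS : ∀ b : ℝ, 0 ≤ b → b ≤ Real.pi →
      ρ • S z b = Complex.sin (ρ * (b:ℂ)) • (1 : Mat m)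
        + ∫ t in (0:ℝ)..b, Complex.sin (ρ * ((b:ℂ) - (t:ℂ))) • (Q t * S z t) := by
    intro b hb0 hbp
    have hid := key_identity z (fun t => Q t * S z t) (S z) (S' z) (hSsol z).1
      ((hSsol z).2) hb0 (hQSb b hb0 hbp)
      (fun t => Complex.sin (ρ * ((b:ℂ) - (t:ℂ))))
      (fun t => -(ρ * Complex.cos (ρ * ((b:ℂ) - (t:ℂ)))))
      (fun t => -(z * Complex.sin (ρ * ((b:ℂ) - (t:ℂ)))))
      (hasDerivAt_sin_aff ρ b)
      (fun x => by
        have hder := ((hasDerivAt_cos_aff ρ (b:ℂ) x).const_mul ρ).neg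
        exact hder.congr_deriv (by rw [← hzρ]; ring))
      (by
        have : Continuous fun t : ℝ => ρ * ((b:ℂ) - (t:ℂ)) :=
          continuous_const.mul (continuous_const.sub Complex.continuous_ofReal)
        exact (continuous_const.mul (Complex.continuous_sin.comp this)).neg)
      (fun x => rfl)
    have e0 : ((b:ℂ) - (b:ℂ)) = 0 := sub_self _
    rw [hS0 z, hS'0 z] at hid
    simp only [e0, Complex.ofReal_zero, mul_zero, Complex.sin_zero, Complex.cos_zero, mul_one,
      zero_smul, smul_zero, sub_zero, zero_sub, neg_smul, neg_neg, sub_neg_eq_add,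
      zero_add] at hid
    -- hid should now say: ∫ ... = ρ • S z b - Complex.sin (ρ * b) • 1  (up to form)
    rw [hid]
    abel
  -- the cosine integral equation at π
  have keyC : S' z Real.pi = Complex.cos (ρ * (Real.pi:ℂ)) • (1 : Mat m)
      + ∫ t in (0:ℝ)..Real.pi, Complex.cos (ρ * ((Real.pi:ℂ) - (t:ℂ))) • (Q t * S z t) := by
    have hid := key_identity z (fun t => Q t * S z t) (S z) (S' z) (hSsol z).1
      ((hSsol z).2) hpi0 hQS
      (fun t => Complex.cos (ρ * ((Real.pi:ℂ) - (t:ℂ))))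
      (fun t => ρ * Complex.sin (ρ * ((Real.pi:ℂ) - (t:ℂ))))
      (fun t => -(z * Complex.cos (ρ * ((Real.pi:ℂ) - (t:ℂ)))))
      (hasDerivAt_cos_aff ρ Real.pi)
      (fun x => by
        have hder := (hasDerivAt_sin_aff ρ (Real.pi:ℂ) x).const_mul ρ
        exact hder.congr_deriv (by rw [← hzρ]; ring))
      (by
        have : Continuous fun t : ℝ => ρ * ((Real.pi:ℂ) - (t:ℂ)) :=
          continuous_const.mul (continuous_const.sub Complex.continuous_ofReal)
        exact (continuous_const.mul (Complex.continuous_cos.comp this)).neg)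
      (fun x => rfl)
    have e0 : ((Real.pi:ℂ) - (Real.pi:ℂ)) = 0 := sub_self _
    rw [hS0 z, hS'0 z] at hid
    simp only [e0, Complex.ofReal_zero, mul_zero, Complex.sin_zero, Complex.cos_zero, mul_one,
      zero_smul, smul_zero, sub_zero, one_smul, zero_sub, neg_smul, neg_neg,
      sub_neg_eq_add] at hid
    rw [hid]
    abel
    -- kernel bounds for |sin| and |cos|
  have hψsin : ∀ b : ℝ, ∀ t ∈ Set.Ioc (0:ℝ) b,
      ‖Complex.sin (ρ * ((b:ℂ) - (t:ℂ)))‖ ≤ Real.exp (τ*(b-t)) := by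
    intro b t ht
    refine (abs_sin_le _).trans (Real.exp_le_exp.2 ?_)
    have him : (ρ * ((b:ℂ) - (t:ℂ))).im = ρ.im * (b - t) := by
      have hcast : ((b:ℂ) - (t:ℂ)) = ((b - t : ℝ) : ℂ) := by push_cast; ring
      rw [hcast]
      simp [Complex.mul_im]
    rw [him, abs_mul, hτdef, abs_of_nonneg (sub_nonneg.2 ht.2)]
  have hψcos : ∀ b : ℝ, ∀ t ∈ Set.Ioc (0:ℝ) b,
      ‖Complex.cos (ρ * ((b:ℂ) - (t:ℂ)))‖ ≤ Real.exp (τ*(b-t)) := by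
    intro b t ht
    refine (abs_cos_le _).trans (Real.exp_le_exp.2 ?_)
    have him : (ρ * ((b:ℂ) - (t:ℂ))).im = ρ.im * (b - t) := by
      have hcast : ((b:ℂ) - (t:ℂ)) = ((b - t : ℝ) : ℂ) := by push_cast; ring
      rw [hcast]
      simp [Complex.mul_im]
    rw [him, abs_mul, hτdef, abs_of_nonneg (sub_nonneg.2 ht.2)]
  -- generic kernel integral bound
  have kerbound : ∀ b : ℝ, 0 ≤ b → b ≤ Real.pi → ∀ (ψ : ℝ → ℂ) (W : ℝ → Mat m) (c : ℝ),
      0 ≤ c →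
      (∀ t ∈ Set.Ioc (0:ℝ) b, ‖ψ t‖ ≤ Real.exp (τ*(b-t))) →
      (∀ t ∈ Set.Ioc (0:ℝ) b, ‖W t‖ ≤ c * Real.exp (τ*t)) →
      ‖∫ t in (0:ℝ)..b, ψ t • (Q t * W t)‖ ≤ c * Real.exp (τ*b) * K := by
    intro b hb0 hbp ψ W c hc hψ hW
    have hQnb : IntervalIntegrable (fun t => ‖Q t‖) volume 0 b := by
      apply hQnint.mono_set
      rw [Set.uIcc_of_le hb0, Set.uIcc_of_le hpi0]
      exact Set.Icc_subset_Icc le_rfl hbp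
    have hgint : IntervalIntegrable (fun t => (c * Real.exp (τ*b)) * ‖Q t‖) volume 0 b :=
      hQnb.const_mul _
    have hle : ∀ᵐ t ∂(volume.restrict (Set.uIoc 0 b)),
        ‖ψ t • (Q t * W t)‖ ≤ (c * Real.exp (τ*b)) * ‖Q t‖ := by
      rw [Set.uIoc_of_le hb0]
      filter_upwards [ae_restrict_mem measurableSet_Ioc] with t ht
      have h2 : ‖Q t * W t‖ ≤ ‖Q t‖ * (c * Real.exp (τ*t)) :=
        le_trans (norm_mul_le _ _) (mul_le_mul_of_nonneg_left (hW t ht) (norm_nonneg _))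
      have h5 : Real.exp (τ*(b-t)) * Real.exp (τ*t) = Real.exp (τ*b) := by
        rw [← Real.exp_add]; ring_nf
      calc ‖ψ t • (Q t * W t)‖ = ‖ψ t‖ * ‖Q t * W t‖ := norm_smul _ _
        _ ≤ Real.exp (τ*(b-t)) * (‖Q t‖ * (c * Real.exp (τ*t))) := by
            exact mul_le_mul (hψ t ht) h2 (norm_nonneg _) (Real.exp_nonneg _)
        _ = (c * Real.exp (τ*b)) * ‖Q t‖ := by rw [← h5]; ring
    have hmain := intervalIntegral.norm_integral_le_of_norm_le hb0
        ((ae_restrict_iff' measurableSet_Ioc).1 (by rwa [Set.uIoc_of_le hb0] at hle)) hgint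
    rw [intervalIntegral.integral_const_mul] at hmain
    have hQb0 : 0 ≤ ∫ t in (0:ℝ)..b, ‖Q t‖ :=
      intervalIntegral.integral_nonneg hb0 fun _ _ => norm_nonneg _
    have hQbK : (∫ t in (0:ℝ)..b, ‖Q t‖) ≤ K := by
      rw [hKdef]
      exact intervalIntegral.integral_mono_interval le_rfl hb0 hbp
        (Filter.Eventually.of_forall fun t => norm_nonneg _) hQnint
    calc ‖∫ t in (0:ℝ)..b, ψ t • (Q t * W t)‖
        ≤ |c * Real.exp (τ*b) * ∫ t in (0:ℝ)..b, ‖Q t‖| := hmain.trans (le_abs_self _)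
      _ = c * Real.exp (τ*b) * ∫ t in (0:ℝ)..b, ‖Q t‖ :=
          abs_of_nonneg (mul_nonneg (mul_nonneg hc (Real.exp_nonneg _)) hQb0)
      _ ≤ c * Real.exp (τ*b) * K :=
          mul_le_mul_of_nonneg_left hQbK (mul_nonneg hc (Real.exp_nonneg _))
  -- a priori bound on S z
  have hSb : ∀ x ∈ Set.Icc (0:ℝ) Real.pi, ‖S z x‖ ≤ 2 / ‖ρ‖ * Real.exp (τ*x) := by
    set gf : ℝ → ℝ := fun x => Real.exp (-(τ*x)) * ‖S z x‖ with hgfdef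
    have hgfc : ContinuousOn gf (Set.Icc 0 Real.pi) :=
      ((Real.continuous_exp.comp ((continuous_const.mul continuous_id).neg)).mul
        (hSc z).norm).continuousOn
    obtain ⟨x₀, hx₀, hmax⟩ := isCompact_Icc.exists_isMaxOn
      ⟨0, Set.mem_Icc.2 ⟨le_rfl, hpi0⟩⟩ hgfc
    set M : ℝ := gf x₀ with hMdef
    have hM0 : 0 ≤ M := mul_nonneg (Real.exp_nonneg _) (norm_nonneg _)
    have hMub : ∀ t ∈ Set.Icc (0:ℝ) Real.pi, ‖S z t‖ ≤ M * Real.exp (τ*t) := by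
      intro t ht
      have h2 : Real.exp (-(τ*t)) * ‖S z t‖ ≤ M := hmax ht
      have h3 := mul_le_mul_of_nonneg_left h2 (Real.exp_nonneg (τ*t))
      rw [← mul_assoc, ← Real.exp_add] at h3
      simp only [add_neg_cancel, Real.exp_zero, one_mul] at h3
      linarith [h3]
    have hsinx₀ : ‖Complex.sin (ρ * (x₀:ℂ))‖ ≤ Real.exp (τ*x₀) := by
      refine (abs_sin_le _).trans (Real.exp_le_exp.2 ?_)
      have him : (ρ * (x₀:ℂ)).im = ρ.im * x₀ := by simp [Complex.mul_im]
      rw [him, abs_mul, hτdef, abs_of_nonneg hx₀.1]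
    have hestρ : ‖ρ‖ * ‖S z x₀‖ ≤ Real.exp (τ*x₀) * (1 + M*K) := by
      have hk := keyS x₀ hx₀.1 hx₀.2
      have hn : ‖ρ • S z x₀‖ ≤ ‖Complex.sin (ρ * (x₀:ℂ))‖ * ‖(1:Mat m)‖
          + M * Real.exp (τ*x₀) * K := by
        rw [hk]
        refine (norm_add_le _ _).trans (add_le_add (le_of_eq (norm_smul _ _)) ?_)
        exact kerbound x₀ hx₀.1 hx₀.2 _ _ M hM0 (hψsin x₀)
          (fun t ht => hMub t ⟨ht.1.le, ht.2.trans hx₀.2⟩)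
      rw [norm_smul, norm_one, mul_one] at hn
      nlinarith [hn, hsinx₀, norm_nonneg (S z x₀), Real.exp_pos (τ*x₀)]
    have h1 : ‖ρ‖ * M ≤ 1 + M*K := by
      have h3 := mul_le_mul_of_nonneg_left hestρ (Real.exp_nonneg (-(τ*x₀)))
      have e1 : Real.exp (-(τ*x₀)) * (Real.exp (τ*x₀) * (1 + M*K)) = 1 + M*K := by
        rw [← mul_assoc, ← Real.exp_add]
        simp
      have e2 : Real.exp (-(τ*x₀)) * (‖ρ‖ * ‖S z x₀‖) = ‖ρ‖ * M := by
        rw [hMdef, hgfdef]; ring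
      rw [e1, e2] at h3
      exact h3
    have hMle : M ≤ 2 / ‖ρ‖ := by
      rw [le_div_iff₀ hρpos]
      nlinarith [mul_le_mul_of_nonneg_right hz hM0, h1, hM0, hK0]
    intro x hx
    calc ‖S z x‖ ≤ M * Real.exp (τ*x) := hMub x hx
      _ ≤ 2 / ‖ρ‖ * Real.exp (τ*x) :=
          mul_le_mul_of_nonneg_right hMle (Real.exp_nonneg _)
  -- the remainder function E
  set Efun : ℝ → Mat m := fun t => S z t - (ρ⁻¹ * Complex.sin (ρ * (t:ℂ))) • (1:Mat m)
    with hEfundef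
  have hEkey : ∀ b : ℝ, 0 ≤ b → b ≤ Real.pi →
      Efun b = ρ⁻¹ • ∫ t in (0:ℝ)..b, Complex.sin (ρ * ((b:ℂ) - (t:ℂ))) • (Q t * S z t) := by
    intro b hb0 hbp
    have hk := congrArg (fun v => ρ⁻¹ • v) (keyS b hb0 hbp)
    simp only [smul_add, smul_smul, inv_mul_cancel₀ hρ0, one_smul] at hk
    show S z b - (ρ⁻¹ * Complex.sin (ρ * (b:ℂ))) • (1:Mat m) = _
    rw [hk]
    abel
  have hEb : ∀ t ∈ Set.Icc (0:ℝ) Real.pi,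
      ‖Efun t‖ ≤ (2*K/(‖ρ‖)^2) * Real.exp (τ*t) := by
    intro t ht
    rw [hEkey t ht.1 ht.2, norm_smul, norm_inv]
    have hker := kerbound t ht.1 ht.2 _ _ (2 / ‖ρ‖) (by positivity) (hψsin t)
      (fun s hs => hSb s ⟨hs.1.le, hs.2.trans ht.2⟩)
    refine le_trans (mul_le_mul_of_nonneg_left hker (by positivity)) (le_of_eq ?_)
    field_simp
  have hEcont : Continuous Efun := by
    rw [hEfundef]
    apply (hSc z).sub
    exact (continuous_const.mul (Complex.continuous_sin.comp
      (continuous_const.mul Complex.continuous_ofReal))).smul continuous_const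
  -- final decomposition
  set I2 : Mat m := ∫ t in (0:ℝ)..Real.pi,
    Complex.sin (ρ * ((Real.pi:ℂ) - (t:ℂ))) • (Q t * S z t) with hI2def
  have hcoscont : Continuous fun t : ℝ => Complex.cos (ρ * ((Real.pi:ℂ) - (t:ℂ))) :=
    Complex.continuous_cos.comp (continuous_const.mul
      (continuous_const.sub Complex.continuous_ofReal))
  have hint2 : IntervalIntegrable
      (fun t => Complex.cos (ρ * ((Real.pi:ℂ) - (t:ℂ))) • (Q t * Efun t)) volume 0 Real.pi :=
    intInt_cont_smul (hQint.mul_continuousOn hEcont.continuousOn) hcoscont.continuousOn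
  have hsc1 : Continuous fun t : ℝ =>
      Complex.cos (ρ * ((Real.pi:ℂ) - (t:ℂ))) * (ρ⁻¹ * Complex.sin (ρ * (t:ℂ))) :=
    hcoscont.mul (continuous_const.mul (Complex.continuous_sin.comp
      (continuous_const.mul Complex.continuous_ofReal)))
  have hint1 : IntervalIntegrable (fun t =>
      (Complex.cos (ρ * ((Real.pi:ℂ) - (t:ℂ))) * (ρ⁻¹ * Complex.sin (ρ * (t:ℂ)))) • Q t)
      volume 0 Real.pi := intInt_cont_smul hQint hsc1.continuousOn
  have hI1 : (∫ t in (0:ℝ)..Real.pi, Complex.cos (ρ * ((Real.pi:ℂ) - (t:ℂ))) • (Q t * S z t))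
      = (∫ t in (0:ℝ)..Real.pi,
          (Complex.cos (ρ * ((Real.pi:ℂ) - (t:ℂ))) * (ρ⁻¹ * Complex.sin (ρ * (t:ℂ)))) • Q t)
        + ∫ t in (0:ℝ)..Real.pi,
            Complex.cos (ρ * ((Real.pi:ℂ) - (t:ℂ))) • (Q t * Efun t) := by
    rw [← intervalIntegral.integral_add hint1 hint2]
    apply intervalIntegral.integral_congr
    intro t _
    have hS : S z t = (ρ⁻¹ * Complex.sin (ρ * (t:ℂ))) • (1:Mat m) + Efun t := by
      simp only [hEfundef]; abel
    have heq : Complex.cos (ρ * ((Real.pi:ℂ) - (t:ℂ))) • (Q t * S z t)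
        = (Complex.cos (ρ * ((Real.pi:ℂ) - (t:ℂ))) * (ρ⁻¹ * Complex.sin (ρ * (t:ℂ)))) • Q t
          + Complex.cos (ρ * ((Real.pi:ℂ) - (t:ℂ))) • (Q t * Efun t) := by
      rw [hS, Matrix.mul_add, mul_smul_comm, Matrix.mul_one, smul_add, smul_smul]
    exact heq
  have hintW : IntervalIntegrable
      (fun t => Complex.sin (ρ * ((Real.pi:ℂ) - 2*(t:ℂ))) • Q t) volume 0 Real.pi :=
    intInt_cont_smul hQint (Complex.continuous_sin.comp (continuous_const.mul
      (continuous_const.sub (continuous_const.mul Complex.continuous_ofReal)))).continuousOn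
  have hA : (∫ t in (0:ℝ)..Real.pi,
        (Complex.cos (ρ * ((Real.pi:ℂ) - (t:ℂ))) * (ρ⁻¹ * Complex.sin (ρ * (t:ℂ)))) • Q t)
      = (Complex.sin (ρ * (Real.pi:ℂ)) * (2*ρ)⁻¹) • (∫ t in (0:ℝ)..Real.pi, Q t)
        - (1/(2*ρ)) • ∫ t in (0:ℝ)..Real.pi,
            Complex.sin (ρ * ((Real.pi:ℂ) - 2*(t:ℂ))) • Q t := by
    have hpt : ∀ t : ℝ,
        (Complex.cos (ρ * ((Real.pi:ℂ) - (t:ℂ))) * (ρ⁻¹ * Complex.sin (ρ * (t:ℂ)))) • Q t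
        = (Complex.sin (ρ * (Real.pi:ℂ)) * (2*ρ)⁻¹) • Q t
          - (1/(2*ρ)) • (Complex.sin (ρ * ((Real.pi:ℂ) - 2*(t:ℂ))) • Q t) := by
      intro t
      rw [smul_smul, ← sub_smul]
      congr 1
      have hs := Complex.sin_sub_sin (ρ * (Real.pi:ℂ)) (ρ * ((Real.pi:ℂ) - 2*(t:ℂ)))
      have e1 : (ρ * (Real.pi:ℂ) - ρ * ((Real.pi:ℂ) - 2*(t:ℂ)))/2 = ρ*(t:ℂ) := by ring
      have e2 : (ρ * (Real.pi:ℂ) + ρ * ((Real.pi:ℂ) - 2*(t:ℂ)))/2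
          = ρ*((Real.pi:ℂ) - (t:ℂ)) := by ring
      rw [e1, e2] at hs
      linear_combination (-(ρ⁻¹)/2) * hs
    rw [intervalIntegral.integral_congr (fun t _ => hpt t)]
    rw [intervalIntegral.integral_sub (intInt_cont_smul hQint continuous_const.continuousOn)
      (intInt_cont_smul hintW continuous_const.continuousOn)]
    rw [intervalIntegral.integral_smul, intervalIntegral.integral_smul]
  have hSπ2 : S z Real.pi
      = (ρ⁻¹ * Complex.sin (ρ * (Real.pi:ℂ))) • (1:Mat m) + ρ⁻¹ • I2 := by
    have hk := congrArg (fun v => ρ⁻¹ • v) (keyS Real.pi hpi0 le_rfl)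
    simp only [smul_add, smul_smul, inv_mul_cancel₀ hρ0, one_smul] at hk
    rw [hk, hI2def]
  have hHS : H * S z Real.pi
      = (ρ⁻¹ * Complex.sin (ρ * (Real.pi:ℂ))) • H + ρ⁻¹ • (H * I2) := by
    rw [hSπ2, Matrix.mul_add, mul_smul_comm, mul_smul_comm, Matrix.mul_one]
  have hfinal : (S' z Real.pi + H * S z Real.pi)
      - (Complex.cos (ρ * (Real.pi:ℂ)) • (1:Mat m)
        + (Complex.sin (ρ * (Real.pi:ℂ)) / ρ) • ω₀
        - (1 / (2 * ρ)) • ∫ t in (0:ℝ)..Real.pi,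
            Complex.sin (ρ * ((Real.pi:ℂ) - 2*(t:ℂ))) • Q t)
      = (∫ t in (0:ℝ)..Real.pi,
            Complex.cos (ρ * ((Real.pi:ℂ) - (t:ℂ))) • (Q t * Efun t))
        + ρ⁻¹ • (H * I2) := by
    rw [keyC, hI1, hA, hHS, hω₀]
    have hs1 : Complex.sin (ρ * (Real.pi:ℂ)) / ρ = ρ⁻¹ * Complex.sin (ρ * (Real.pi:ℂ)) := by
      rw [div_eq_mul_inv, mul_comm]
    rw [hs1, smul_add, smul_smul]
    have hs2 : ρ⁻¹ * Complex.sin (ρ * (Real.pi:ℂ)) * 2⁻¹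
        = Complex.sin (ρ * (Real.pi:ℂ)) * (2*ρ)⁻¹ := by
      rw [mul_inv]; ring
    rw [hs2]
    abel
  -- final norm estimate
  rw [hfinal]
  have hR1 : ‖∫ t in (0:ℝ)..Real.pi,
      Complex.cos (ρ * ((Real.pi:ℂ) - (t:ℂ))) • (Q t * Efun t)‖
      ≤ (2*K/(‖ρ‖)^2) * Real.exp (τ*Real.pi) * K :=
    kerbound Real.pi hpi0 le_rfl _ _ (2*K/(‖ρ‖)^2) (by positivity) (hψcos Real.pi)
      (fun t ht => hEb t ⟨ht.1.le, ht.2⟩)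
  have hI2n : ‖I2‖ ≤ 2 / ‖ρ‖ * Real.exp (τ*Real.pi) * K := by
    rw [hI2def]
    exact kerbound Real.pi hpi0 le_rfl _ _ (2 / ‖ρ‖) (by positivity) (hψsin Real.pi)
      (fun t ht => hSb t ⟨ht.1.le, ht.2⟩)
  have h2n : ‖ρ⁻¹ • (H * I2)‖
      ≤ (‖ρ‖)⁻¹ * (‖H‖ * (2 / ‖ρ‖ * Real.exp (τ*Real.pi) * K)) := by
    rw [norm_smul, norm_inv]
    exact mul_le_mul_of_nonneg_left
      (le_trans (norm_mul_le _ _) (mul_le_mul_of_nonneg_left hI2n (norm_nonneg _)))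
      (by positivity)
  refine (norm_add_le _ _).trans ?_
  refine le_trans (add_le_add hR1 h2n) ?_
  have hP2 : (0:ℝ) < (‖ρ‖)^2 := by positivity
  have e3 : (‖ρ‖)⁻¹ * (‖H‖ * (2 / ‖ρ‖ * Real.exp (τ*Real.pi) * K))
      = 2*K*‖H‖ * Real.exp (τ*Real.pi) / (‖ρ‖)^2 := by
    field_simp
  have e4 : 2*K/(‖ρ‖)^2 * Real.exp (τ*Real.pi) * K
      = 2*K*K*Real.exp (τ*Real.pi)/(‖ρ‖)^2 := by ring
  rw [e3, e4, ← add_div]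
  gcongr
  nlinarith [Real.exp_pos (τ*Real.pi)]
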